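/- Let P(u,v) = (k₁·u^{β₁+β₂} + 2k₂·u^{β₁}·v^{β₂} + k₃·v^{β₁+β₂})^{δ/(β₁+β₂)} be a 2-input Kadiyala production function on (0,∞)² with parameters satisfying (★★). If the Gaussian curvature of the graph surface {(u,v,P(u,v)) : u>0, v>0} vanishes at every point of (0,∞)² and δ ≠ 1, then either (k₂ = 0 and β₁+β₂ = 1) or (β₁ = β₂ = 1 and k₁k₃ = k₂²); in particular, P is then a perfect substitutes production function, i.e., of the form P(u,v) = (a·u + b·v)^δ for some constants a, b ≥ 0. -/

import Mathlib

open Real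

set_option maxHeartbeats 2000000

/-- Partial derivative in the first variable. -/
noncomputable def pdu (f : ℝ → ℝ → ℝ) : ℝ → ℝ → ℝ := fun u v => deriv (fun x => f x v) u

/-- Partial derivative in the second variable. -/
noncomputable def pdv (f : ℝ → ℝ → ℝ) : ℝ → ℝ → ℝ := fun u v => deriv (fun y => f u y) v

/-- Hessian determinant `f_uu · f_vv − f_uv²` of `f` at `(u, v)`. -/
noncomputable def hessDet (f : ℝ → ℝ → ℝ) (u v : ℝ) : ℝ :=
  pdu (pdu f) u v * pdv (pdv f) u v - pdv (pdu f) u v ^ 2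

/-- Gaussian curvature of the graph surface `{(u, v, f u v)}` at `(u, v)`:
`K = (f_uu · f_vv − f_uv²) / (1 + f_u² + f_v²)²`. -/
noncomputable def gaussK (f : ℝ → ℝ → ℝ) (u v : ℝ) : ℝ :=
  hessDet f u v / (1 + pdu f u v ^ 2 + pdv f u v ^ 2) ^ 2

/-- The 2-input Kadiyala production function
`P(u,v) = (k₁·u^(β₁+β₂) + 2k₂·u^β₁·v^β₂ + k₃·v^(β₁+β₂))^(δ/(β₁+β₂))`. -/
noncomputable def PKad (k₁ k₂ k₃ β₁ β₂ δ : ℝ) : ℝ → ℝ → ℝ := fun u v =>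
  (k₁ * u ^ (β₁ + β₂) + 2 * k₂ * u ^ β₁ * v ^ β₂ + k₃ * v ^ (β₁ + β₂)) ^ (δ / (β₁ + β₂))

private lemma moment4 (c₁ c₂ c₃ c₄ p₁ p₂ p₃ p₄ : ℝ)
    (h : ∀ u : ℝ, 0 < u → c₁*u^p₁ + c₂*u^p₂ + c₃*u^p₃ + c₄*u^p₄ = 0) :
    ∀ u : ℝ, 0 < u → c₁*p₁*u^p₁ + c₂*p₂*u^p₂ + c₃*p₃*u^p₃ + c₄*p₄*u^p₄ = 0 := by
  intro u hu
  have hd : HasDerivAt (fun x : ℝ => c₁*x^p₁ + c₂*x^p₂ + c₃*x^p₃ + c₄*x^p₄)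
      (c₁*(p₁*u^(p₁-1)) + c₂*(p₂*u^(p₂-1)) + c₃*(p₃*u^(p₃-1)) + c₄*(p₄*u^(p₄-1))) u := by
    exact ((((Real.hasDerivAt_rpow_const (Or.inl hu.ne')).const_mul c₁).add
      ((Real.hasDerivAt_rpow_const (Or.inl hu.ne')).const_mul c₂)).add
      ((Real.hasDerivAt_rpow_const (Or.inl hu.ne')).const_mul c₃)).add
      ((Real.hasDerivAt_rpow_const (Or.inl hu.ne')).const_mul c₄)
  have hzero : deriv (fun x : ℝ => c₁*x^p₁ + c₂*x^p₂ + c₃*x^p₃ + c₄*x^p₄) u = 0 := by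
    have hev : (fun x : ℝ => c₁*x^p₁ + c₂*x^p₂ + c₃*x^p₃ + c₄*x^p₄) =ᶠ[nhds u] (fun _ => (0:ℝ)) := by
      filter_upwards [Ioi_mem_nhds hu] with x hx
      exact h x hx
    rw [hev.deriv_eq, deriv_const]
  have h2 := hd.deriv
  rw [hzero] at h2
  have e : ∀ p : ℝ, u^(p-1) = u^p/u := by
    intro p; rw [Real.rpow_sub hu, Real.rpow_one]
  rw [e p₁, e p₂, e p₃, e p₄] at h2
  have h3 : u * (c₁*(p₁*(u^p₁/u)) + c₂*(p₂*(u^p₂/u)) + c₃*(p₃*(u^p₃/u)) + c₄*(p₄*(u^p₄/u))) = 0 := by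
    rw [← h2, mul_zero]
  field_simp at h3
  linarith [h3]

private lemma kad_Q_pos (k₁ k₂ k₃ β₁ β₂ : ℝ) (hk₁ : 0 ≤ k₁) (hk₂ : 0 ≤ k₂) (hk₃ : 0 ≤ k₃)
    (hsum : k₁ + 2 * k₂ + k₃ = 1) :
    ∀ x y : ℝ, 0 < x → 0 < y →
      0 < k₁ * x ^ (β₁ + β₂) + 2 * k₂ * x ^ β₁ * y ^ β₂ + k₃ * y ^ (β₁ + β₂) := by
  intro x y hx hy
  have A := Real.rpow_pos_of_pos hx (β₁+β₂)
  have B := Real.rpow_pos_of_pos hx β₁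
  have C := Real.rpow_pos_of_pos hy β₂
  have D := Real.rpow_pos_of_pos hy (β₁+β₂)
  rcases lt_or_eq_of_le hk₁ with h1 | h1
  · nlinarith [mul_pos h1 A, mul_nonneg (mul_nonneg (by linarith : (0:ℝ) ≤ 2*k₂) B.le) C.le,
      mul_nonneg hk₃ D.le]
  · rcases lt_or_eq_of_le hk₂ with h2 | h2
    · nlinarith [mul_pos (mul_pos (by linarith : (0:ℝ) < 2*k₂) B) C, mul_nonneg hk₃ D.le,
        mul_nonneg hk₁ A.le]
    · have h3 : 0 < k₃ := by nlinarith
      nlinarith [mul_pos h3 D, mul_nonneg hk₁ A.le,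
        mul_nonneg (mul_nonneg (by linarith : (0:ℝ) ≤ 2*k₂) B.le) C.le]

private lemma kad_X_zero (k₁ k₂ k₃ β₁ β₂ δ : ℝ) (hb : β₁ + β₂ ≠ 0) (hδ0 : δ ≠ 0) (hδ1 : δ ≠ 1)
    (hQ : ∀ x y : ℝ, 0 < x → 0 < y →
      0 < k₁ * x ^ (β₁ + β₂) + 2 * k₂ * x ^ β₁ * y ^ β₂ + k₃ * y ^ (β₁ + β₂))
    (hdev : ∀ u v : ℝ, 0 < u → 0 < v → hessDet (PKad k₁ k₂ k₃ β₁ β₂ δ) u v = 0) :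
    ∀ u v : ℝ, 0 < u → 0 < v →
      (2*(β₁+β₂)*k₁*k₂*β₂*(β₂-1)) * (u^β₁*u^β₁*u^β₂*v^β₂)
      + ((β₁+β₂-1)*(β₁+β₂)^2*k₁*k₃) * (u^β₁*u^β₂*v^β₁*v^β₂)
      + (-(4*k₂^2*β₁*β₂)) * (u^β₁*u^β₁*v^β₂*v^β₂)
      + (2*(β₁+β₂)*k₂*k₃*β₁*(β₁-1)) * (u^β₁*v^β₁*v^β₂*v^β₂) = 0 := by
  intro u v hu hv
  -- first partial derivatives of the base Q
  have hQu : ∀ x y : ℝ, 0 < x →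
      HasDerivAt (fun t => k₁ * t ^ (β₁ + β₂) + 2 * k₂ * t ^ β₁ * y ^ β₂ + k₃ * y ^ (β₁ + β₂))
        (k₁ * ((β₁+β₂) * x ^ (β₁+β₂-1)) + 2 * k₂ * (β₁ * x ^ (β₁-1)) * y ^ β₂) x := by
    intro x y hx
    exact (((Real.hasDerivAt_rpow_const (Or.inl hx.ne')).const_mul k₁).add
      (((Real.hasDerivAt_rpow_const (Or.inl hx.ne')).const_mul (2*k₂)).mul_const (y^β₂))).add_const _
  have hQv : ∀ x y : ℝ, 0 < y →
      HasDerivAt (fun t => k₁ * x ^ (β₁ + β₂) + 2 * k₂ * x ^ β₁ * t ^ β₂ + k₃ * t ^ (β₁ + β₂))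
        (2 * k₂ * x ^ β₁ * (β₂ * y ^ (β₂-1)) + k₃ * ((β₁+β₂) * y ^ (β₁+β₂-1))) y := by
    intro x y hy
    exact (((Real.hasDerivAt_rpow_const (Or.inl hy.ne')).const_mul
      (2 * k₂ * x ^ β₁)).const_add (k₁ * x ^ (β₁+β₂))).add
      ((Real.hasDerivAt_rpow_const (Or.inl hy.ne')).const_mul k₃)
  -- first partials of P
  have hPu : ∀ x y : ℝ, 0 < x → 0 < y →
      HasDerivAt (fun t => PKad k₁ k₂ k₃ β₁ β₂ δ t y)
        ((k₁ * ((β₁+β₂) * x ^ (β₁+β₂-1)) + 2 * k₂ * (β₁ * x ^ (β₁-1)) * y ^ β₂) * (δ/(β₁+β₂)) *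
          (k₁ * x ^ (β₁ + β₂) + 2 * k₂ * x ^ β₁ * y ^ β₂ + k₃ * y ^ (β₁ + β₂)) ^ (δ/(β₁+β₂)-1)) x := by
    intro x y hx hy
    have := (hQu x y hx).rpow_const (p := δ/(β₁+β₂)) (Or.inl (hQ x y hx hy).ne')
    simpa [PKad] using this
  have hPv : ∀ x y : ℝ, 0 < x → 0 < y →
      HasDerivAt (fun t => PKad k₁ k₂ k₃ β₁ β₂ δ x t)
        ((2 * k₂ * x ^ β₁ * (β₂ * y ^ (β₂-1)) + k₃ * ((β₁+β₂) * y ^ (β₁+β₂-1))) * (δ/(β₁+β₂)) *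
          (k₁ * x ^ (β₁ + β₂) + 2 * k₂ * x ^ β₁ * y ^ β₂ + k₃ * y ^ (β₁ + β₂)) ^ (δ/(β₁+β₂)-1)) y := by
    intro x y hx hy
    have := (hQv x y hy).rpow_const (p := δ/(β₁+β₂)) (Or.inl (hQ x y hx hy).ne')
    simpa [PKad] using this
  have hpdu : ∀ x y : ℝ, 0 < x → 0 < y →
      pdu (PKad k₁ k₂ k₃ β₁ β₂ δ) x y =
        (k₁ * ((β₁+β₂) * x ^ (β₁+β₂-1)) + 2 * k₂ * (β₁ * x ^ (β₁-1)) * y ^ β₂) * (δ/(β₁+β₂)) *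
          (k₁ * x ^ (β₁ + β₂) + 2 * k₂ * x ^ β₁ * y ^ β₂ + k₃ * y ^ (β₁ + β₂)) ^ (δ/(β₁+β₂)-1) := by
    intro x y hx hy
    exact (hPu x y hx hy).deriv
  have hpdv : ∀ x y : ℝ, 0 < x → 0 < y →
      pdv (PKad k₁ k₂ k₃ β₁ β₂ δ) x y =
        (2 * k₂ * x ^ β₁ * (β₂ * y ^ (β₂-1)) + k₃ * ((β₁+β₂) * y ^ (β₁+β₂-1))) * (δ/(β₁+β₂)) *
          (k₁ * x ^ (β₁ + β₂) + 2 * k₂ * x ^ β₁ * y ^ β₂ + k₃ * y ^ (β₁ + β₂)) ^ (δ/(β₁+β₂)-1) := by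
    intro x y hx hy
    exact (hPv x y hx hy).deriv
  -- second derivatives of Q
  have hQuu : HasDerivAt (fun t => k₁ * ((β₁+β₂) * t ^ (β₁+β₂-1)) + 2 * k₂ * (β₁ * t ^ (β₁-1)) * v ^ β₂)
      (k₁ * ((β₁+β₂) * ((β₁+β₂-1) * u ^ (β₁+β₂-1-1))) + 2 * k₂ * (β₁ * ((β₁-1) * u ^ (β₁-1-1))) * v ^ β₂) u := by
    exact ((((Real.hasDerivAt_rpow_const (Or.inl hu.ne')).const_mul (β₁+β₂)).const_mul k₁).add
      ((((Real.hasDerivAt_rpow_const (Or.inl hu.ne')).const_mul β₁).const_mul (2*k₂)).mul_const (v^β₂)))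
  have hQuy : HasDerivAt (fun t => k₁ * ((β₁+β₂) * u ^ (β₁+β₂-1)) + 2 * k₂ * (β₁ * u ^ (β₁-1)) * t ^ β₂)
      (2 * k₂ * (β₁ * u ^ (β₁-1)) * (β₂ * v ^ (β₂-1))) v := by
    exact ((Real.hasDerivAt_rpow_const (Or.inl hv.ne')).const_mul
      (2 * k₂ * (β₁ * u ^ (β₁-1)))).const_add (k₁ * ((β₁+β₂) * u ^ (β₁+β₂-1)))
  have hQvv : HasDerivAt (fun t => 2 * k₂ * u ^ β₁ * (β₂ * t ^ (β₂-1)) + k₃ * ((β₁+β₂) * t ^ (β₁+β₂-1)))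
      (2 * k₂ * u ^ β₁ * (β₂ * ((β₂-1) * v ^ (β₂-1-1))) + k₃ * ((β₁+β₂) * ((β₁+β₂-1) * v ^ (β₁+β₂-1-1)))) v := by
    exact ((((Real.hasDerivAt_rpow_const (Or.inl hv.ne')).const_mul β₂).const_mul
      (2 * k₂ * u ^ β₁)).add (((Real.hasDerivAt_rpow_const (Or.inl hv.ne')).const_mul (β₁+β₂)).const_mul k₃))
  -- second partials of P
  have hQbu := hQu u v hu
  have hQbv := hQv u v hv
  have hQne : (k₁ * u ^ (β₁ + β₂) + 2 * k₂ * u ^ β₁ * v ^ β₂ + k₃ * v ^ (β₁ + β₂)) ≠ 0 :=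
    (hQ u v hu hv).ne'
  have hPuu : pdu (pdu (PKad k₁ k₂ k₃ β₁ β₂ δ)) u v =
      (k₁ * ((β₁+β₂) * ((β₁+β₂-1) * u ^ (β₁+β₂-1-1))) + 2 * k₂ * (β₁ * ((β₁-1) * u ^ (β₁-1-1))) * v ^ β₂)
        * (δ/(β₁+β₂)) *
        (k₁ * u ^ (β₁ + β₂) + 2 * k₂ * u ^ β₁ * v ^ β₂ + k₃ * v ^ (β₁ + β₂)) ^ (δ/(β₁+β₂)-1)
      + (k₁ * ((β₁+β₂) * u ^ (β₁+β₂-1)) + 2 * k₂ * (β₁ * u ^ (β₁-1)) * v ^ β₂) * (δ/(β₁+β₂)) *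
        ((k₁ * ((β₁+β₂) * u ^ (β₁+β₂-1)) + 2 * k₂ * (β₁ * u ^ (β₁-1)) * v ^ β₂) * (δ/(β₁+β₂)-1) *
          (k₁ * u ^ (β₁ + β₂) + 2 * k₂ * u ^ β₁ * v ^ β₂ + k₃ * v ^ (β₁ + β₂)) ^ (δ/(β₁+β₂)-1-1)) := by
    have hev : (fun t => pdu (PKad k₁ k₂ k₃ β₁ β₂ δ) t v) =ᶠ[nhds u]
        (fun t => (k₁ * ((β₁+β₂) * t ^ (β₁+β₂-1)) + 2 * k₂ * (β₁ * t ^ (β₁-1)) * v ^ β₂) * (δ/(β₁+β₂)) *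
          (k₁ * t ^ (β₁ + β₂) + 2 * k₂ * t ^ β₁ * v ^ β₂ + k₃ * v ^ (β₁ + β₂)) ^ (δ/(β₁+β₂)-1)) := by
      filter_upwards [Ioi_mem_nhds hu] with x hx
      exact hpdu x v hx hv
    have hd : HasDerivAt
        (fun t => (k₁ * ((β₁+β₂) * t ^ (β₁+β₂-1)) + 2 * k₂ * (β₁ * t ^ (β₁-1)) * v ^ β₂) * (δ/(β₁+β₂)) *
          (k₁ * t ^ (β₁ + β₂) + 2 * k₂ * t ^ β₁ * v ^ β₂ + k₃ * v ^ (β₁ + β₂)) ^ (δ/(β₁+β₂)-1))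
        ((k₁ * ((β₁+β₂) * ((β₁+β₂-1) * u ^ (β₁+β₂-1-1))) + 2 * k₂ * (β₁ * ((β₁-1) * u ^ (β₁-1-1))) * v ^ β₂)
          * (δ/(β₁+β₂)) *
          (k₁ * u ^ (β₁ + β₂) + 2 * k₂ * u ^ β₁ * v ^ β₂ + k₃ * v ^ (β₁ + β₂)) ^ (δ/(β₁+β₂)-1)
        + (k₁ * ((β₁+β₂) * u ^ (β₁+β₂-1)) + 2 * k₂ * (β₁ * u ^ (β₁-1)) * v ^ β₂) * (δ/(β₁+β₂)) *
          ((k₁ * ((β₁+β₂) * u ^ (β₁+β₂-1)) + 2 * k₂ * (β₁ * u ^ (β₁-1)) * v ^ β₂) * (δ/(β₁+β₂)-1) *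
            (k₁ * u ^ (β₁ + β₂) + 2 * k₂ * u ^ β₁ * v ^ β₂ + k₃ * v ^ (β₁ + β₂)) ^ (δ/(β₁+β₂)-1-1))) u :=
      (hQuu.mul_const (δ/(β₁+β₂))).mul (hQbu.rpow_const (Or.inl hQne))
    show deriv (fun t => pdu (PKad k₁ k₂ k₃ β₁ β₂ δ) t v) u = _
    rw [hev.deriv_eq, hd.deriv]
  have hPuv : pdv (pdu (PKad k₁ k₂ k₃ β₁ β₂ δ)) u v =
      (2 * k₂ * (β₁ * u ^ (β₁-1)) * (β₂ * v ^ (β₂-1))) * (δ/(β₁+β₂)) * (k₁ * u ^ (β₁ + β₂) + 2 * k₂ * u ^ β₁ * v ^ β₂ + k₃ * v ^ (β₁ + β₂)) ^ ((δ/(β₁+β₂))-1)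
      + (k₁ * ((β₁+β₂) * u ^ (β₁+β₂-1)) + 2 * k₂ * (β₁ * u ^ (β₁-1)) * v ^ β₂) * (δ/(β₁+β₂)) * ((2 * k₂ * u ^ β₁ * (β₂ * v ^ (β₂-1)) + k₃ * ((β₁+β₂) * v ^ (β₁+β₂-1))) * ((δ/(β₁+β₂))-1) * (k₁ * u ^ (β₁ + β₂) + 2 * k₂ * u ^ β₁ * v ^ β₂ + k₃ * v ^ (β₁ + β₂)) ^ ((δ/(β₁+β₂))-1-1)) := by
    have hev : (fun t => pdu (PKad k₁ k₂ k₃ β₁ β₂ δ) u t) =ᶠ[nhds v]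
        (fun t => (k₁ * ((β₁+β₂) * u ^ (β₁+β₂-1)) + 2 * k₂ * (β₁ * u ^ (β₁-1)) * t ^ β₂) * (δ/(β₁+β₂)) *
          (k₁ * u ^ (β₁ + β₂) + 2 * k₂ * u ^ β₁ * t ^ β₂ + k₃ * t ^ (β₁ + β₂)) ^ ((δ/(β₁+β₂))-1)) := by
      filter_upwards [Ioi_mem_nhds hv] with y hy
      exact hpdu u y hu hy
    have hd := (hQuy.mul_const (δ/(β₁+β₂))).mul (hQbv.rpow_const (p := (δ/(β₁+β₂))-1) (Or.inl hQne))
    show deriv (fun t => pdu (PKad k₁ k₂ k₃ β₁ β₂ δ) u t) v = _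
    rw [hev.deriv_eq]; exact hd.deriv
  have hPvv : pdv (pdv (PKad k₁ k₂ k₃ β₁ β₂ δ)) u v =
      (2 * k₂ * u ^ β₁ * (β₂ * ((β₂-1) * v ^ (β₂-1-1))) + k₃ * ((β₁+β₂) * ((β₁+β₂-1) * v ^ (β₁+β₂-1-1)))) * (δ/(β₁+β₂)) * (k₁ * u ^ (β₁ + β₂) + 2 * k₂ * u ^ β₁ * v ^ β₂ + k₃ * v ^ (β₁ + β₂)) ^ ((δ/(β₁+β₂))-1)
      + (2 * k₂ * u ^ β₁ * (β₂ * v ^ (β₂-1)) + k₃ * ((β₁+β₂) * v ^ (β₁+β₂-1))) * (δ/(β₁+β₂)) * ((2 * k₂ * u ^ β₁ * (β₂ * v ^ (β₂-1)) + k₃ * ((β₁+β₂) * v ^ (β₁+β₂-1))) * ((δ/(β₁+β₂))-1) * (k₁ * u ^ (β₁ + β₂) + 2 * k₂ * u ^ β₁ * v ^ β₂ + k₃ * v ^ (β₁ + β₂)) ^ ((δ/(β₁+β₂))-1-1)) := by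
    have hev : (fun t => pdv (PKad k₁ k₂ k₃ β₁ β₂ δ) u t) =ᶠ[nhds v]
        (fun t => (2 * k₂ * u ^ β₁ * (β₂ * t ^ (β₂-1)) + k₃ * ((β₁+β₂) * t ^ (β₁+β₂-1))) * (δ/(β₁+β₂)) *
          (k₁ * u ^ (β₁ + β₂) + 2 * k₂ * u ^ β₁ * t ^ β₂ + k₃ * t ^ (β₁ + β₂)) ^ ((δ/(β₁+β₂))-1)) := by
      filter_upwards [Ioi_mem_nhds hv] with y hy
      exact hpdv u y hu hy
    have hd := (hQvv.mul_const (δ/(β₁+β₂))).mul (hQbv.rpow_const (p := (δ/(β₁+β₂))-1) (Or.inl hQne))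
    show deriv (fun t => pdv (PKad k₁ k₂ k₃ β₁ β₂ δ) u t) v = _
    rw [hev.deriv_eq]; exact hd.deriv
  have h0 := hdev u v hu hv
  rw [hessDet, hPuu, hPvv, hPuv] at h0
  have r1 : (k₁ * u ^ (β₁ + β₂) + 2 * k₂ * u ^ β₁ * v ^ β₂ + k₃ * v ^ (β₁ + β₂)) ^ ((δ/(β₁+β₂))-1) = (k₁ * u ^ (β₁ + β₂) + 2 * k₂ * u ^ β₁ * v ^ β₂ + k₃ * v ^ (β₁ + β₂)) ^ ((δ/(β₁+β₂))-1-1) * (k₁ * u ^ (β₁ + β₂) + 2 * k₂ * u ^ β₁ * v ^ β₂ + k₃ * v ^ (β₁ + β₂)) := by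
    have h9 := Real.rpow_add (hQ u v hu hv) (δ/(β₁+β₂)-1-1) 1
    rw [Real.rpow_one] at h9
    rw [← h9]
    congr 1
    ring
  rw [r1] at h0
  have h5 : ((k₁ * u ^ (β₁ + β₂) + 2 * k₂ * u ^ β₁ * v ^ β₂ + k₃ * v ^ (β₁ + β₂)) ^ (δ/(β₁+β₂)-1-1))^2 * (δ/(β₁+β₂))^2 * ((((δ/(β₁+β₂))-1) * (k₁ * ((β₁+β₂) * u ^ (β₁+β₂-1)) + 2 * k₂ * (β₁ * u ^ (β₁-1)) * v ^ β₂)^2 + (k₁ * u ^ (β₁ + β₂) + 2 * k₂ * u ^ β₁ * v ^ β₂ + k₃ * v ^ (β₁ + β₂)) * (k₁ * ((β₁+β₂) * ((β₁+β₂-1) * u ^ (β₁+β₂-1-1))) + 2 * k₂ * (β₁ * ((β₁-1) * u ^ (β₁-1-1))) * v ^ β₂)) * (((δ/(β₁+β₂))-1) * (2 * k₂ * u ^ β₁ * (β₂ * v ^ (β₂-1)) + k₃ * ((β₁+β₂) * v ^ (β₁+β₂-1)))^2 + (k₁ * u ^ (β₁ + β₂) + 2 * k₂ * u ^ β₁ *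 v ^ β₂ + k₃ * v ^ (β₁ + β₂)) * (2 * k₂ * u ^ β₁ * (β₂ * ((β₂-1) * v ^ (β₂-1-1))) + k₃ * ((β₁+β₂) * ((β₁+β₂-1) * v ^ (β₁+β₂-1-1))))) - (((δ/(β₁+β₂))-1) * (2 * k₂ * u ^ β₁ * (β₂ * v ^ (β₂-1)) + k₃ * ((β₁+β₂) * v ^ (β₁+β₂-1))) * (k₁ * ((β₁+β₂) * u ^ (β₁+β₂-1)) + 2 * k₂ * (β₁ * u ^ (β₁-1)) * v ^ β₂) + (k₁ * u ^ (β₁ + β₂) + 2 * k₂ * u ^ β₁ * v ^ β₂ + k₃ * v ^ (β₁ + β₂)) * (2 * k₂ * (β₁ * u ^ (β₁-1)) * (β₂ * v ^ (β₂-1))))^2) = 0 := by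
    linear_combination h0
  have hT : (0:ℝ) < (k₁ * u ^ (β₁ + β₂) + 2 * k₂ * u ^ β₁ * v ^ β₂ + k₃ * v ^ (β₁ + β₂)) ^ (δ/(β₁+β₂)-1-1) := Real.rpow_pos_of_pos (hQ u v hu hv) _
  have hs : (δ/(β₁+β₂)) ≠ 0 := div_ne_zero hδ0 hb
  have hF : ((((δ/(β₁+β₂))-1) * (k₁ * ((β₁+β₂) * u ^ (β₁+β₂-1)) + 2 * k₂ * (β₁ * u ^ (β₁-1)) * v ^ β₂)^2 + (k₁ * u ^ (β₁ + β₂) + 2 * k₂ * u ^ β₁ * v ^ β₂ + k₃ * v ^ (β₁ + β₂)) * (k₁ * ((β₁+β₂) * ((β₁+β₂-1) * u ^ (β₁+β₂-1-1))) + 2 * k₂ * (β₁ * ((β₁-1) * u ^ (β₁-1-1))) * v ^ β₂)) * (((δ/(β₁+β₂))-1) * (2 * k₂ * u ^ β₁ * (β₂ * v ^ (β₂-1)) + k₃ * ((β₁+β₂) * v ^ (β₁+β₂-1)))^2 + (k₁ * u ^ (β₁ + β₂) + 2 * k₂ * u ^ β₁ * v ^ β₂ + k₃ * v ^ (β₁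 + β₂)) * (2 * k₂ * u ^ β₁ * (β₂ * ((β₂-1) * v ^ (β₂-1-1))) + k₃ * ((β₁+β₂) * ((β₁+β₂-1) * v ^ (β₁+β₂-1-1))))) - (((δ/(β₁+β₂))-1) * (2 * k₂ * u ^ β₁ * (β₂ * v ^ (β₂-1)) + k₃ * ((β₁+β₂) * v ^ (β₁+β₂-1))) * (k₁ * ((β₁+β₂) * u ^ (β₁+β₂-1)) + 2 * k₂ * (β₁ * u ^ (β₁-1)) * v ^ β₂) + (k₁ * u ^ (β₁ + β₂) + 2 * k₂ * u ^ β₁ * v ^ β₂ + k₃ * v ^ (β₁ + β₂)) * (2 * k₂ * (β₁ * u ^ (β₁-1)) * (β₂ * v ^ (β₂-1))))^2) = 0 := by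
    have hne : ((k₁ * u ^ (β₁ + β₂) + 2 * k₂ * u ^ β₁ * v ^ β₂ + k₃ * v ^ (β₁ + β₂)) ^ (δ/(β₁+β₂)-1-1))^2 * (δ/(β₁+β₂))^2 ≠ 0 :=
      mul_ne_zero (pow_ne_zero 2 hT.ne') (pow_ne_zero 2 hs)
    exact (mul_eq_zero.mp h5).resolve_left hne
  have hQp := hQ u v hu hv
  have eu1 : u ^ β₁ = u ^ (β₁-1-1) * u * u := by
    conv_lhs => rw [show β₁ = (β₁-1-1)+1+1 by ring, Real.rpow_add hu, Real.rpow_add hu,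
      Real.rpow_one]
  have eu2 : u ^ (β₁-1) = u ^ (β₁-1-1) * u := by
    conv_lhs => rw [show β₁-1 = (β₁-1-1)+1 by ring, Real.rpow_add hu, Real.rpow_one]
  have eu3 : u ^ (β₁+β₂) = u ^ (β₁-1-1) * u ^ β₂ * u * u := by
    conv_lhs => rw [show β₁+β₂ = (β₁-1-1)+β₂+1+1 by ring, Real.rpow_add hu, Real.rpow_add hu,
      Real.rpow_add hu, Real.rpow_one]
  have eu4 : u ^ (β₁+β₂-1) = u ^ (β₁-1-1) * u ^ β₂ * u := by
    conv_lhs => rw [show β₁+β₂-1 = (β₁-1-1)+β₂+1 by ring, Real.rpow_add hu, Real.rpow_add hu,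
      Real.rpow_one]
  have eu5 : u ^ (β₁+β₂-1-1) = u ^ (β₁-1-1) * u ^ β₂ := by
    conv_lhs => rw [show β₁+β₂-1-1 = (β₁-1-1)+β₂ by ring, Real.rpow_add hu]
  have ev1 : v ^ β₂ = v ^ (β₂-1-1) * v * v := by
    conv_lhs => rw [show β₂ = (β₂-1-1)+1+1 by ring, Real.rpow_add hv, Real.rpow_add hv,
      Real.rpow_one]
  have ev2 : v ^ (β₂-1) = v ^ (β₂-1-1) * v := by
    conv_lhs => rw [show β₂-1 = (β₂-1-1)+1 by ring, Real.rpow_add hv, Real.rpow_one]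
  have ev3 : v ^ (β₁+β₂) = v ^ β₁ * v ^ (β₂-1-1) * v * v := by
    conv_lhs => rw [show β₁+β₂ = β₁+(β₂-1-1)+1+1 by ring, Real.rpow_add hv, Real.rpow_add hv,
      Real.rpow_add hv, Real.rpow_one]
  have ev4 : v ^ (β₁+β₂-1) = v ^ β₁ * v ^ (β₂-1-1) * v := by
    conv_lhs => rw [show β₁+β₂-1 = β₁+(β₂-1-1)+1 by ring, Real.rpow_add hv, Real.rpow_add hv,
      Real.rpow_one]
  have ev5 : v ^ (β₁+β₂-1-1) = v ^ β₁ * v ^ (β₂-1-1) := by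
    conv_lhs => rw [show β₁+β₂-1-1 = β₁+(β₂-1-1) by ring, Real.rpow_add hv]
  rw [eu3, eu4, eu5, eu1, eu2, ev3, ev4, ev5, ev1, ev2] at hF
  rw [eu3, eu1, ev3, ev1] at hQp
  rw [eu1, ev1]
  have hc : δ/(β₁+β₂)*(β₁+β₂) = δ := div_mul_cancel₀ δ hb
  have h6 : (δ-1) * (k₁*(u^(β₁-1-1)*u^β₂*u*u) + 2*k₂*(u^(β₁-1-1)*u*u)*(v^(β₂-1-1)*v*v) + k₃*(v^β₁*(v^(β₂-1-1)*v*v)))^2 * ((2*(β₁+β₂)*k₁*k₂*β₂*(β₂-1)) * ((u^(β₁-1-1)*u*u)*(u^(β₁-1-1)*u*u)*u^β₂*(v^(β₂-1-1)*v*v)) + ((β₁+β₂-1)*(β₁+β₂)^2*k₁*k₃) * ((u^(β₁-1-1)*u*u)*u^β₂*v^β₁*(v^(β₂-1-1)*v*v)) + (-(4*k₂^2*β₁*β₂)) * ((u^(β₁-1-1)*u*u)*(u^(β₁-1-1)*u*u)*(v^(β₂-1-1)*v*v)*(v^(β₂-1-1)*v*v)) + (2*(β₁+β₂)*k₂*k₃*β₁*(β₁-1))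 * ((u^(β₁-1-1)*u*u)*v^β₁*(v^(β₂-1-1)*v*v)*(v^(β₂-1-1)*v*v))) = 0 := by
    linear_combination (u*v)^2 * hF - ((k₁*(u^(β₁-1-1)*u^β₂*u*u) + 2*k₂*(u^(β₁-1-1)*u*u)*(v^(β₂-1-1)*v*v) + k₃*(v^β₁*(v^(β₂-1-1)*v*v)))^2 * ((2*(β₁+β₂)*k₁*k₂*β₂*(β₂-1)) * ((u^(β₁-1-1)*u*u)*(u^(β₁-1-1)*u*u)*u^β₂*(v^(β₂-1-1)*v*v)) + ((β₁+β₂-1)*(β₁+β₂)^2*k₁*k₃) * ((u^(β₁-1-1)*u*u)*u^β₂*v^β₁*(v^(β₂-1-1)*v*v)) + (-(4*k₂^2*β₁*β₂)) * ((u^(β₁-1-1)*u*u)*(u^(β₁-1-1)*u*u)*(v^(β₂-1-1)*v*v)*(v^(β₂-1-1)*v*v)) + (2*(β₁+β₂)*k₂*k₃*β₁*(β₁-1)) * ((u^(β₁-1-1)*u*u)*v^β₁*(v^(β₂-1-1)*v*v)*(v^(β₂-1-1)*v*v)))) * hc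
  have hQA : (0:ℝ) < (k₁*(u^(β₁-1-1)*u^β₂*u*u) + 2*k₂*(u^(β₁-1-1)*u*u)*(v^(β₂-1-1)*v*v) + k₃*(v^β₁*(v^(β₂-1-1)*v*v))) := by linarith [hQp]
  have hne : (δ-1) * (k₁*(u^(β₁-1-1)*u^β₂*u*u) + 2*k₂*(u^(β₁-1-1)*u*u)*(v^(β₂-1-1)*v*v) + k₃*(v^β₁*(v^(β₂-1-1)*v*v)))^2 ≠ 0 :=
    mul_ne_zero (sub_ne_zero.mpr hδ1) (pow_ne_zero 2 hQA.ne')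
  have h7 := (mul_eq_zero.mp h6).resolve_left hne
  linarith [h7]

theorem kadiyala_developable_of_ne_one
    (k₁ k₂ k₃ β₁ β₂ δ : ℝ)
    (hsum : k₁ + 2 * k₂ + k₃ = 1) (hk₁ : 0 ≤ k₁) (hk₂ : 0 ≤ k₂) (hk₃ : 0 ≤ k₃)
    (h12 : ¬(k₁ = 0 ∧ k₂ = 0)) (h23 : ¬(k₂ = 0 ∧ k₃ = 0))
    (hβ₁ : 0 < β₁ * (β₁ + β₂)) (hβ₂ : 0 < β₂ * (β₁ + β₂)) (hδ : 0 < δ) (hδ1 : δ ≠ 1)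
    (hdev : ∀ u v : ℝ, 0 < u → 0 < v → gaussK (PKad k₁ k₂ k₃ β₁ β₂ δ) u v = 0) :
    ((k₂ = 0 ∧ β₁ + β₂ = 1) ∨ (β₁ = 1 ∧ β₂ = 1 ∧ k₁ * k₃ = k₂ ^ 2)) ∧
      ∃ a b : ℝ, 0 ≤ a ∧ 0 ≤ b ∧
        ∀ u v : ℝ, 0 < u → 0 < v → PKad k₁ k₂ k₃ β₁ β₂ δ u v = (a * u + b * v) ^ δ := by
  have hb : β₁ + β₂ ≠ 0 := by
    intro h; rw [h, mul_zero] at hβ₁; exact lt_irrefl 0 hβ₁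
  have hb1 : β₁ ≠ 0 := by
    intro h; rw [h, zero_mul] at hβ₁; exact lt_irrefl 0 hβ₁
  have hb2 : β₂ ≠ 0 := by
    intro h; rw [h, zero_mul] at hβ₂; exact lt_irrefl 0 hβ₂
  have hb12 : 0 < β₁ * β₂ := by nlinarith [mul_pos hβ₁ hβ₂, sq_nonneg (β₁+β₂)]
  have hQ := kad_Q_pos k₁ k₂ k₃ β₁ β₂ hk₁ hk₂ hk₃ hsum
  have hdet : ∀ u v : ℝ, 0 < u → 0 < v → hessDet (PKad k₁ k₂ k₃ β₁ β₂ δ) u v = 0 := by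
    intro u v hu hv
    have h := hdev u v hu hv
    simp only [gaussK] at h
    have hden : ((1:ℝ) + pdu (PKad k₁ k₂ k₃ β₁ β₂ δ) u v ^ 2
        + pdv (PKad k₁ k₂ k₃ β₁ β₂ δ) u v ^ 2) ^ 2 ≠ 0 := by positivity
    exact (div_eq_zero_iff.mp h).resolve_right hden
  have hX := kad_X_zero k₁ k₂ k₃ β₁ β₂ δ hb hδ.ne' hδ1 hQ hdet
  have hX1 : ∀ u : ℝ, 0 < u →
      (2*(β₁+β₂)*k₁*k₂*β₂*(β₂-1))*u^(β₁+(β₁+β₂)) + ((β₁+β₂-1)*(β₁+β₂)^2*k₁*k₃)*u^(β₁+β₂)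
      + (-(4*k₂^2*β₁*β₂))*u^(β₁+β₁) + (2*(β₁+β₂)*k₂*k₃*β₁*(β₁-1))*u^β₁ = 0 := by
    intro u hu
    have h := hX u 1 hu one_pos
    simp only [Real.one_rpow, mul_one] at h
    have e1 : u^(β₁+(β₁+β₂)) = u^β₁*(u^β₁*u^β₂) := by
      rw [Real.rpow_add hu, Real.rpow_add hu]
    have e2 : u^(β₁+β₂) = u^β₁*u^β₂ := Real.rpow_add hu β₁ β₂
    have e3 : u^(β₁+β₁) = u^β₁*u^β₁ := Real.rpow_add hu β₁ β₁
    linear_combination h + (2*(β₁+β₂)*k₁*k₂*β₂*(β₂-1))*e1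
      + ((β₁+β₂-1)*(β₁+β₂)^2*k₁*k₃)*e2 + (-(4*k₂^2*β₁*β₂))*e3
  have hM1 := moment4 _ _ _ _ _ _ _ _ hX1
  have hM2 := moment4 _ _ _ _ _ _ _ _ hM1
  have hM3 := moment4 _ _ _ _ _ _ _ _ hM2
  have e0 := hX1 1 one_pos
  have e1 := hM1 1 one_pos
  have e2 := hM2 1 one_pos
  have e3 := hM3 1 one_pos
  simp only [Real.one_rpow, mul_one] at e0 e1 e2 e3
  by_cases hk2z : k₂ = 0
  · -- k₂ = 0 : left branch
    have hk1ne : k₁ ≠ 0 := fun h => h12 ⟨h, hk2z⟩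
    have hk3ne : k₃ ≠ 0 := fun h => h23 ⟨hk2z, h⟩
    have hk1p : 0 < k₁ := lt_of_le_of_ne hk₁ (Ne.symm hk1ne)
    have hk3p : 0 < k₃ := lt_of_le_of_ne hk₃ (Ne.symm hk3ne)
    have h9 : (β₁+β₂-1)*(β₁+β₂)^2*k₁*k₃ = 0 := by
      linear_combination e0 + (-(2*(β₁+β₂)*k₁*β₂*(β₂-1)) + 4*k₂*β₁*β₂
        - 2*(β₁+β₂)*k₃*β₁*(β₁-1))*hk2z
    have hsq : 0 < (β₁+β₂)^2 := lt_of_le_of_ne (sq_nonneg _) (Ne.symm (pow_ne_zero 2 hb))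
    have hbeq : β₁ + β₂ = 1 := by
      have h10 : β₁+β₂-1 = 0 := by
        by_contra h10
        rcases lt_or_gt_of_ne h10 with hlt | hgt
        · nlinarith [mul_pos (mul_pos hsq hk1p) hk3p]
        · nlinarith [mul_pos (mul_pos hsq hk1p) hk3p]
      linarith
    refine ⟨Or.inl ⟨hk2z, hbeq⟩, k₁, k₃, hk₁, hk₃, fun u v hu hv => ?_⟩
    simp only [PKad, hk2z, hbeq, Real.rpow_one, div_one, mul_zero, zero_mul, add_zero]
  · -- k₂ ≠ 0
    have hk2p : 0 < k₂ := lt_of_le_of_ne hk₂ (Ne.symm hk2z)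
    by_cases hbb : β₁ = β₂
    · -- β₁ = β₂
      subst hbb
      have hg2 : 0 < β₁^2 := lt_of_le_of_ne (sq_nonneg _) (Ne.symm (pow_ne_zero 2 hb1))
      have hA : (2*(β₁+β₁)*k₁*k₂*β₁*(β₁-1)) * ((β₁+(β₁+β₁)) - (β₁+β₁)) * ((β₁+(β₁+β₁)) - β₁) = 0 := by
        linear_combination e2 - ((β₁+β₁)+β₁)*e1 + ((β₁+β₁)*β₁)*e0
      have hB : (2*(β₁+β₁)*k₂*k₃*β₁*(β₁-1)) * (β₁ - (β₁+(β₁+β₁))) * (β₁ - (β₁+β₁)) = 0 := by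
        linear_combination e2 - ((β₁+(β₁+β₁))+(β₁+β₁))*e1 + ((β₁+(β₁+β₁))*(β₁+β₁))*e0
      have hCsum : ((β₁+β₁-1)*(β₁+β₁)^2*k₁*k₃) + (-(4*k₂^2*β₁*β₁)) = 0 := by
        have h11 : (((β₁+β₁-1)*(β₁+β₁)^2*k₁*k₃) + (-(4*k₂^2*β₁*β₁))) * (((β₁+β₁) - (β₁+(β₁+β₁))) * ((β₁+β₁) - β₁)) = 0 := by
          linear_combination e2 - ((β₁+(β₁+β₁))+β₁)*e1 + ((β₁+(β₁+β₁))*β₁)*e0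
        have h12' : ((β₁+β₁) - (β₁+(β₁+β₁))) * ((β₁+β₁) - β₁) = -(β₁^2) := by ring
        rw [h12'] at h11
        have := mul_eq_zero.mp h11
        rcases this with h | h
        · exact h
        · exact absurd h (by nlinarith)
      have hk1e : k₁*(β₁-1) = 0 := by
        have h8 : (8*(β₁^2*β₁^2)*k₂) * (k₁*(β₁-1)) = 0 := by linear_combination hA
        rcases mul_eq_zero.mp h8 with h | h
        · exact absurd h (by nlinarith [mul_pos (mul_pos hg2 hg2) hk2p])
        · exact h
      have hk3e : k₃*(β₁-1) = 0 := by
        have h8 : (8*(β₁^2*β₁^2)*k₂) * (k₃*(β₁-1)) = 0 := by linear_combination hB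
        rcases mul_eq_zero.mp h8 with h | h
        · exact absurd h (by nlinarith [mul_pos (mul_pos hg2 hg2) hk2p])
        · exact h
      by_cases hg1 : β₁ = 1
      · -- β₁ = β₂ = 1
        have hKK : k₁ * k₃ = k₂^2 := by
          rw [hg1] at hCsum
          nlinarith [hCsum]
        refine ⟨Or.inr ⟨hg1, hg1, hKK⟩, Real.sqrt k₁, Real.sqrt k₃,
          Real.sqrt_nonneg _, Real.sqrt_nonneg _, fun u v hu hv => ?_⟩
        have ha2 : Real.sqrt k₁ ^ 2 = k₁ := Real.sq_sqrt hk₁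
        have hb2' : Real.sqrt k₃ ^ 2 = k₃ := Real.sq_sqrt hk₃
        have hab : Real.sqrt k₁ * Real.sqrt k₃ = k₂ := by
          rw [← Real.sqrt_mul hk₁, hKK, Real.sqrt_sq hk₂]
        have hkkpos : 0 < k₁ * k₃ := by rw [hKK]; exact pow_pos hk2p 2
        have hk1p : 0 < k₁ := by nlinarith
        have hk3p : 0 < k₃ := by nlinarith
        have hx : 0 < Real.sqrt k₁ * u + Real.sqrt k₃ * v := by
          have h1 : 0 < Real.sqrt k₁ := Real.sqrt_pos.mpr hk1p
          nlinarith [mul_pos h1 hu, mul_nonneg (Real.sqrt_nonneg k₃) hv.le]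
        simp only [PKad, hg1]
        have r2 : u ^ ((1:ℝ)+1) = u*u := by rw [Real.rpow_add hu, Real.rpow_one]
        have r3 : v ^ ((1:ℝ)+1) = v*v := by rw [Real.rpow_add hv, Real.rpow_one]
        rw [r2, r3]
        simp only [Real.rpow_one]
        have hbase : k₁*(u*u) + 2*k₂*u*v + k₃*(v*v)
            = (Real.sqrt k₁*u+Real.sqrt k₃*v)*(Real.sqrt k₁*u+Real.sqrt k₃*v) := by
          linear_combination (-(u*u))*ha2 + (-(2*u*v))*hab + (-(v*v))*hb2'
        rw [show k₁*(u*u) + 2*k₂*u*(v) + k₃*(v*v)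
            = (Real.sqrt k₁*u+Real.sqrt k₃*v)*(Real.sqrt k₁*u+Real.sqrt k₃*v) from hbase]
        have hxx : (Real.sqrt k₁*u+Real.sqrt k₃*v)*(Real.sqrt k₁*u+Real.sqrt k₃*v)
            = (Real.sqrt k₁*u+Real.sqrt k₃*v) ^ ((1:ℝ)+1) := by
          rw [Real.rpow_add hx, Real.rpow_one]
        rw [hxx, ← Real.rpow_mul hx.le]
        congr 1
        field_simp
      · -- β₁ ≠ 1 : contradiction
        exfalso
        have hk1z : k₁ = 0 := by
          rcases mul_eq_zero.mp hk1e with h | h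
          · exact h
          · exact absurd h (sub_ne_zero.mpr hg1)
        have hk3z : k₃ = 0 := by
          rcases mul_eq_zero.mp hk3e with h | h
          · exact h
          · exact absurd h (sub_ne_zero.mpr hg1)
        rw [hk1z, hk3z] at hCsum
        nlinarith [hCsum, mul_pos (mul_pos hk2p hk2p) hg2]
    · -- β₁ ≠ β₂ : contradiction
      exfalso
      have h9 : (-(4*k₂^2*β₁*β₂)) * (((β₁+β₁) - (β₁+(β₁+β₂))) * (((β₁+β₁)-(β₁+β₂)) * ((β₁+β₁)-β₁))) = 0 := by
        linear_combination e3 - ((β₁+(β₁+β₂)) + (β₁+β₂) + β₁)*e2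
          + ((β₁+(β₁+β₂))*(β₁+β₂) + (β₁+(β₁+β₂))*β₁ + (β₁+β₂)*β₁)*e1
          - ((β₁+(β₁+β₂))*(β₁+β₂)*β₁)*e0
      have hc3 : -(4*k₂^2*β₁*β₂) ≠ 0 := by
        have h0 : 0 < 4*k₂^2*β₁*β₂ := by nlinarith [mul_pos (mul_pos hk2p hk2p) hb12]
        exact neg_ne_zero.mpr h0.ne'
      have hf1 : (β₁+β₁) - (β₁+(β₁+β₂)) ≠ 0 := by
        intro h; exact hb2 (by linarith)
      have hf2 : (β₁+β₁)-(β₁+β₂) ≠ 0 := by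
        intro h; exact hbb (by linarith)
      have hf3 : (β₁+β₁)-β₁ ≠ 0 := by
        intro h; exact hb1 (by linarith)
      exact (mul_ne_zero hc3 (mul_ne_zero hf1 (mul_ne_zero hf2 hf3))) h9
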